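/- Let A ∈ R^{m×n}, with Z_k ∈ R^{m×k}, W_k ∈ R^{n×k} from a truncated RSVD, Q_W the orthonormal factor of W_k, and selection matrix P with Q_W^T P invertible. If A - A_k = Q_Z T̂_Z D̂_A T̂_W^T Q̃_W^T as in the QR-based partitioning, then ‖A(I - Q_W Q_W^T)‖ ≤ α_{k+1} ‖T̂_Z‖ ‖T_{W,22}‖, where α_{k+1} = ‖D̂_A‖ and T_{W,22} is the trailing triangular block of the QR factorization of W. -/

import Mathlib

open Matrix
open scoped Matrix.Norms.L2Operator

lemma orth_mul_norm_le {p q r : Type*} [Fintype p] [Fintype q] [Fintype r]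
    [DecidableEq p] [DecidableEq q] [DecidableEq r]
    (Q : Matrix p q ℝ) (hQ : Qᵀ * Q = 1) (M : Matrix q r ℝ) :
    ‖Q * M‖ ≤ ‖M‖ := by
  have h1 : ‖(Q * M)ᴴ * (Q * M)‖ = ‖Q * M‖ * ‖Q * M‖ :=
    Matrix.l2_opNorm_conjTranspose_mul_self _
  have h2 : ‖Mᴴ * M‖ = ‖M‖ * ‖M‖ := Matrix.l2_opNorm_conjTranspose_mul_self _
  have key : (Q * M)ᴴ * (Q * M) = Mᴴ * M := by
    rw [Matrix.conjTranspose_mul, Matrix.conjTranspose_eq_transpose_of_trivial Q]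
    rw [Matrix.mul_assoc, ← Matrix.mul_assoc Qᵀ, hQ, Matrix.one_mul]
  rw [key, h2] at h1
  have := mul_self_inj (norm_nonneg M) (norm_nonneg (Q * M)) |>.mp h1
  rw [this]

theorem rsvd_column_projection_error_bound {k m' n' : ℕ}
    (QZk : Matrix (Fin k ⊕ Fin m') (Fin k) ℝ) (QZh : Matrix (Fin k ⊕ Fin m') (Fin m') ℝ)
    (QWk : Matrix (Fin k ⊕ Fin n') (Fin k) ℝ) (QWh : Matrix (Fin k ⊕ Fin n') (Fin n') ℝ)
    (TZk : Matrix (Fin k) (Fin k) ℝ) (TZ12 : Matrix (Fin k) (Fin m') ℝ)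
    (TZ22 : Matrix (Fin m') (Fin m') ℝ)
    (TWk : Matrix (Fin k) (Fin k) ℝ) (TW12 : Matrix (Fin k) (Fin n') ℝ)
    (TW22 : Matrix (Fin n') (Fin n') ℝ)
    (DAk : Matrix (Fin k) (Fin k) ℝ) (DAh : Matrix (Fin m') (Fin n') ℝ)
    (A : Matrix (Fin k ⊕ Fin m') (Fin k ⊕ Fin n') ℝ)
    (hQZ : (Matrix.fromCols QZk QZh)ᵀ * Matrix.fromCols QZk QZh = 1)
    (hQW : (Matrix.fromCols QWk QWh)ᵀ * Matrix.fromCols QWk QWh = 1)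
    (hA : A = QZk * TZk * DAk * TWkᵀ * QWkᵀ +
      Matrix.fromCols QZk QZh * Matrix.fromRows TZ12 TZ22 * DAh *
        (Matrix.fromRows TW12 TW22)ᵀ * (Matrix.fromCols QWk QWh)ᵀ) :
    ‖A * (1 - QWk * QWkᵀ)‖ ≤ ‖DAh‖ * ‖Matrix.fromRows TZ12 TZ22‖ * ‖TW22‖ := by
  -- extract block identities from hQW
  have hblk : Matrix.fromBlocks (QWkᵀ * QWk) (QWkᵀ * QWh) (QWhᵀ * QWk) (QWhᵀ * QWh)
      = Matrix.fromBlocks 1 0 0 1 := by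
    rw [← Matrix.fromRows_mul_fromCols, ← Matrix.transpose_fromCols, hQW,
      Matrix.fromBlocks_one]
  have hkk : QWkᵀ * QWk = 1 := congrArg Matrix.toBlocks₁₁ hblk
  have hhk : QWhᵀ * QWk = 0 := congrArg Matrix.toBlocks₂₁ hblk
  set E : Matrix (Fin k ⊕ Fin n') (Fin k ⊕ Fin n') ℝ := 1 - QWk * QWkᵀ with hE
  have hQWkE : QWkᵀ * E = 0 := by
    rw [hE, Matrix.mul_sub, Matrix.mul_one, ← Matrix.mul_assoc, hkk, Matrix.one_mul, sub_self]
  have hQWhE : QWhᵀ * E = QWhᵀ := by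
    rw [hE, Matrix.mul_sub, Matrix.mul_one, ← Matrix.mul_assoc, hhk, Matrix.zero_mul, sub_zero]
  have hAE : A * E = Matrix.fromCols QZk QZh * (Matrix.fromRows TZ12 TZ22 *
      (DAh * (TW22ᵀ * QWhᵀ))) := by
    rw [hA, Matrix.add_mul]
    have h1 : QZk * TZk * DAk * TWkᵀ * QWkᵀ * E = 0 := by
      rw [Matrix.mul_assoc _ QWkᵀ E, hQWkE, Matrix.mul_zero]
    have h2 : (Matrix.fromCols QWk QWh)ᵀ * E = Matrix.fromRows 0 QWhᵀ := by
      rw [Matrix.transpose_fromCols, Matrix.fromRows_mul, hQWkE, hQWhE]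
    have h3 : (Matrix.fromRows TW12 TW22)ᵀ * Matrix.fromRows (0 : Matrix (Fin k) (Fin k ⊕ Fin n') ℝ) QWhᵀ = TW22ᵀ * QWhᵀ := by
      rw [Matrix.transpose_fromRows, Matrix.fromCols_mul_fromRows, Matrix.mul_zero, zero_add]
    rw [h1, zero_add, Matrix.mul_assoc _ _ E, h2, Matrix.mul_assoc _ _ (Matrix.fromRows 0 QWhᵀ),
      h3]
    simp [Matrix.mul_assoc]
  rw [hAE]
  calc ‖Matrix.fromCols QZk QZh * (Matrix.fromRows TZ12 TZ22 * (DAh * (TW22ᵀ * QWhᵀ)))‖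
      ≤ ‖Matrix.fromRows TZ12 TZ22 * (DAh * (TW22ᵀ * QWhᵀ))‖ :=
        orth_mul_norm_le _ hQZ _
    _ ≤ ‖Matrix.fromRows TZ12 TZ22‖ * ‖DAh * (TW22ᵀ * QWhᵀ)‖ := Matrix.l2_opNorm_mul _ _
    _ ≤ ‖Matrix.fromRows TZ12 TZ22‖ * (‖DAh‖ * ‖TW22ᵀ * QWhᵀ‖) :=
        mul_le_mul_of_nonneg_left (Matrix.l2_opNorm_mul _ _) (norm_nonneg _)
    _ ≤ ‖Matrix.fromRows TZ12 TZ22‖ * (‖DAh‖ * ‖TW22‖) := by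
        have hQWh : QWhᵀ * QWh = 1 := congrArg Matrix.toBlocks₂₂ hblk
        have hW : ‖TW22ᵀ * QWhᵀ‖ ≤ ‖TW22‖ := by
          have h : ‖TW22ᵀ * QWhᵀ‖ = ‖(TW22ᵀ * QWhᵀ)ᴴ‖ :=
            (Matrix.l2_opNorm_conjTranspose _).symm
          rw [h, Matrix.conjTranspose_mul,
            Matrix.conjTranspose_eq_transpose_of_trivial,
            Matrix.conjTranspose_eq_transpose_of_trivial, Matrix.transpose_transpose]
          exact orth_mul_norm_le _ hQWh _
        exact mul_le_mul_of_nonneg_left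
          (mul_le_mul_of_nonneg_left hW (norm_nonneg _)) (norm_nonneg _)
    _ = ‖DAh‖ * ‖Matrix.fromRows TZ12 TZ22‖ * ‖TW22‖ := by ring
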